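/- arXiv:1703.06305 — 4 statements merged into one kernel-verified Lean document; each statement's English description precedes it below -/
import Mathlib

section
/- Fix integers 0 ≤ ℓ < k, let n = k + ℓ + 3, and let F be the abstract simplicial complex on vertex set [n] ∪ {p} whose faces are all subsets of [n] of size at most k + 1 and all sets {p} ∪ σ with σ ⊆ [n] of size at most ℓ + 1. Let σ, τ be disjoint faces of F with dim σ = s, dim τ = t, s + t = k + ℓ, s ≤ t, and s = ℓ (hence t = k). Then: (i) there is no (t+1)-dimensional face of F containing τ and disjoint from σ, and (ii) there are exactly two (s+1)-dimensional faces of F containing σ and disjoint from τ. -/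
/-- The complex `F` on vertex set `[n] ∪ {p}` (with `p = 0`, `[n] = {1,…,n}`):
faces are nonempty subsets of `[n]` of size at most `k+1` together with
nonempty sets containing `0` of size at most `ℓ+2`. -/
def isFaceF (k l n : ℕ) (σ : Finset ℕ) : Prop :=
  σ.Nonempty ∧ σ ⊆ insert 0 (Finset.Icc 1 n) ∧
    (if 0 ∈ σ then σ.card ≤ l + 2 else σ.card ≤ k + 1)

/-- for disjoint faces σ, τ of F with dim σ = ℓ, dim τ = k:
(i) no (k+1)-dimensional face contains τ and is disjoint from σ;
(ii) exactly two (ℓ+1)-dimensional faces contain σ and are disjoint from τ. -/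
theorem stmt5 (k l : ℕ) (hl : l < k) (σ τ : Finset ℕ)
    (hσ : isFaceF k l (k + l + 3) σ) (hτ : isFaceF k l (k + l + 3) τ)
    (hdisj : Disjoint σ τ) (hcσ : σ.card = l + 1) (hcτ : τ.card = k + 1) :
    {ν : Finset ℕ | isFaceF k l (k + l + 3) ν ∧ τ ⊆ ν ∧ ν.card = k + 2 ∧
      Disjoint ν σ} = ∅ ∧
    {ν : Finset ℕ | isFaceF k l (k + l + 3) ν ∧ σ ⊆ ν ∧ ν.card = l + 2 ∧
      Disjoint ν τ}.ncard = 2 := by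
  set V : Finset ℕ := insert 0 (Finset.Icc 1 (k + l + 3)) with hV
  have hVcard : V.card = k + l + 4 := by
    rw [hV, Finset.card_insert_of_notMem (by simp), Nat.card_Icc]; omega
  obtain ⟨hσne, hσsub, hσif⟩ := hσ
  obtain ⟨hτne, hτsub, hτif⟩ := hτ
  constructor
  · rw [Set.eq_empty_iff_forall_notMem]
    rintro ν ⟨⟨hνne, hνsub, hνif⟩, hτν, hνcard, hνdisj⟩
    by_cases h0 : 0 ∈ ν
    · rw [if_pos h0] at hνif; omega
    · rw [if_neg h0] at hνif; omega
  · have key : {ν : Finset ℕ | isFaceF k l (k + l + 3) ν ∧ σ ⊆ ν ∧ ν.card = l + 2 ∧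
        Disjoint ν τ} = ↑((V \ (σ ∪ τ)).image fun x => insert x σ) := by
      ext ν
      simp only [Set.mem_setOf_eq, Finset.coe_image, Set.mem_image, Finset.mem_coe,
        Finset.mem_sdiff, Finset.mem_union]
      constructor
      · rintro ⟨⟨hνne, hνsub, hνif⟩, hσν, hνcard, hνdisj⟩
        have hsd : (ν \ σ).card = 1 := by
          rw [Finset.card_sdiff_of_subset hσν]; omega
        obtain ⟨x, hx⟩ := Finset.card_eq_one.mp hsd
        have hxν : x ∈ ν ∧ x ∉ σ := by
          have := hx ▸ Finset.mem_singleton_self x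
          simpa [Finset.mem_sdiff] using Finset.mem_sdiff.mp (hx ▸ Finset.mem_singleton_self x)
        refine ⟨x, ⟨hνsub hxν.1, ?_⟩, ?_⟩
        · rintro (h | h)
          · exact hxν.2 h
          · exact (Finset.disjoint_left.mp hνdisj hxν.1) h
        · apply Finset.eq_of_subset_of_card_le
          · intro y hy
            rcases Finset.mem_insert.mp hy with rfl | hyσ
            · exact hxν.1
            · exact hσν hyσ
          · rw [hνcard, Finset.card_insert_of_notMem hxν.2, hcσ]
      · rintro ⟨x, ⟨hxV, hxnot⟩, rfl⟩
        have hxσ : x ∉ σ := fun h => hxnot (Or.inl h)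
        have hxτ : x ∉ τ := fun h => hxnot (Or.inr h)
        have hcard : (insert x σ).card = l + 2 := by
          rw [Finset.card_insert_of_notMem hxσ, hcσ]
        refine ⟨⟨Finset.insert_nonempty _ _, Finset.insert_subset hxV hσsub, ?_⟩,
          Finset.subset_insert _ _, hcard, ?_⟩
        · split <;> omega
        · rw [Finset.disjoint_left]
          intro a ha haτ
          rcases Finset.mem_insert.mp ha with rfl | haσ
          · exact hxτ haτ
          · exact (Finset.disjoint_left.mp hdisj haσ) haτ
    rw [key, Set.ncard_coe_finset]
    rw [Finset.card_image_of_injOn]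
    · have hsub : σ ∪ τ ⊆ V := Finset.union_subset hσsub hτsub
      rw [Finset.card_sdiff_of_subset hsub, hVcard, Finset.card_union_of_disjoint hdisj, hcσ, hcτ]
      omega
    · intro x hx y hy hxy
      simp only [Finset.coe_sdiff, Finset.coe_union, Set.mem_diff, Set.mem_union,
        Finset.mem_coe] at hx hy
      have hxy' : insert x σ = insert y σ := hxy
      have : x ∈ insert y σ := hxy' ▸ Finset.mem_insert_self x σ
      rcases Finset.mem_insert.mp this with h | h
      · exact h
      · exact absurd h (fun h => hx.2 (Or.inl h))
end

section
/- Fix integers 0 ≤ ℓ < k, let n = k + ℓ + 3, and let F be the abstract simplicial complex on vertex set [n] ∪ {p} whose faces are all subsets of [n] of size at most k + 1 and all sets {p} ∪ σ with σ ⊆ [n] of size at most ℓ + 1. Let σ, τ be disjoint faces of F with dim σ = s, dim τ = t, s + t = k + ℓ, ℓ < s ≤ t, and suppose neither σ nor τ contains p. Then there is exactly one (s+1)-dimensional face of F containing σ and disjoint from τ, and exactly one (t+1)-dimensional face of F containing τ and disjoint from σ. -/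
lemma stmt6_aux (k l s t : ℕ) (σ τ : Finset ℕ)
    (hσ : isFaceF k l (k + l + 3) σ) (hτ : isFaceF k l (k + l + 3) τ)
    (hdisj : Disjoint σ τ) (hcσ : σ.card = s + 1) (hcτ : τ.card = t + 1)
    (hst : s + t = k + l) (hls : l < s) (hlt : l < t)
    (h0σ : 0 ∉ σ) (h0τ : 0 ∉ τ) :
    {ν : Finset ℕ | isFaceF k l (k + l + 3) ν ∧ σ ⊆ ν ∧ ν.card = s + 2 ∧
      Disjoint ν τ}.ncard = 1 := by
  set U := Finset.Icc 1 (k + l + 3) with hU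
  have hUcard : U.card = k + l + 3 := by simp [hU]
  have hσU : σ ⊆ U := by
    intro x hx
    rcases Finset.mem_insert.1 (hσ.2.1 hx) with h | h
    · exact absurd (h ▸ hx) h0σ
    · exact h
  have hτU : τ ⊆ U := by
    intro x hx
    rcases Finset.mem_insert.1 (hτ.2.1 hx) with h | h
    · exact absurd (h ▸ hx) h0τ
    · exact h
  have hunion : (σ ∪ τ) ⊆ U := Finset.union_subset hσU hτU
  have hucard : (σ ∪ τ).card = k + l + 2 := by
    rw [Finset.card_union_of_disjoint hdisj, hcσ, hcτ]; omega
  have hsd : (U \ (σ ∪ τ)).card = 1 := by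
    rw [Finset.card_sdiff_of_subset hunion, hUcard, hucard]; omega
  obtain ⟨q, hq⟩ := Finset.card_eq_one.1 hsd
  have hqmem : q ∈ U \ (σ ∪ τ) := by rw [hq]; exact Finset.mem_singleton_self q
  have hqU : q ∈ U := (Finset.mem_sdiff.1 hqmem).1
  have hqσ : q ∉ σ := fun h => (Finset.mem_sdiff.1 hqmem).2 (Finset.mem_union_left _ h)
  have hqτ : q ∉ τ := fun h => (Finset.mem_sdiff.1 hqmem).2 (Finset.mem_union_right _ h)
  have hq0 : q ≠ 0 := by
    have := (Finset.mem_Icc.1 hqU).1; omega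
  have hsk : s + 2 ≤ k + 1 := by omega
  have hset : {ν : Finset ℕ | isFaceF k l (k + l + 3) ν ∧ σ ⊆ ν ∧ ν.card = s + 2 ∧
      Disjoint ν τ} = {insert q σ} := by
    ext ν
    simp only [Set.mem_setOf_eq, Set.mem_singleton_iff]
    constructor
    · rintro ⟨⟨hne, hsub, hcard⟩, hσν, hνcard, hντ⟩
      have h0ν : 0 ∉ ν := by
        intro h0
        rw [if_pos h0] at hcard
        omega
      have hνU : ν ⊆ U := by
        intro x hx
        rcases Finset.mem_insert.1 (hsub hx) with h | h
        · exact absurd (h ▸ hx) h0ν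
        · exact h
      have hdiff : (ν \ σ).card = 1 := by
        rw [Finset.card_sdiff_of_subset hσν, hνcard, hcσ]; omega
      obtain ⟨x, hx⟩ := Finset.card_eq_one.1 hdiff
      have hxmem : x ∈ ν \ σ := by rw [hx]; exact Finset.mem_singleton_self x
      have hxν : x ∈ ν := (Finset.mem_sdiff.1 hxmem).1
      have hxσ : x ∉ σ := (Finset.mem_sdiff.1 hxmem).2
      have hxq : x = q := by
        have : x ∈ U \ (σ ∪ τ) := by
          rw [Finset.mem_sdiff]
          refine ⟨hνU hxν, ?_⟩
          intro h
          rcases Finset.mem_union.1 h with h | h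
          · exact hxσ h
          · exact (Finset.disjoint_left.1 hντ hxν) h
        rw [hq] at this
        exact Finset.mem_singleton.1 this
      ext a
      constructor
      · intro ha
        by_cases haσ : a ∈ σ
        · exact Finset.mem_insert_of_mem haσ
        · have : a ∈ ν \ σ := Finset.mem_sdiff.2 ⟨ha, haσ⟩
          rw [hx] at this
          rw [Finset.mem_singleton.1 this, hxq]
          exact Finset.mem_insert_self q σ
      · intro ha
        rcases Finset.mem_insert.1 ha with h | h
        · exact h ▸ hxq ▸ hxν
        · exact hσν h
    · rintro rfl
      have hcard : (insert q σ).card = s + 2 := by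
        rw [Finset.card_insert_of_notMem hqσ, hcσ]
      have h0ν : 0 ∉ insert q σ := by
        intro h
        rcases Finset.mem_insert.1 h with h | h
        · exact hq0 h.symm
        · exact h0σ h
      refine ⟨⟨Finset.insert_nonempty q σ, ?_, ?_⟩, Finset.subset_insert q σ, hcard, ?_⟩
      · exact Finset.insert_subset (Finset.mem_insert_of_mem hqU) hσ.2.1
      · rw [if_neg h0ν, hcard]; omega
      · exact Finset.disjoint_insert_left.2 ⟨hqτ, hdisj⟩
  rw [hset, Set.ncard_singleton]

/-- for disjoint faces σ, τ of F with dim σ = s, dim τ = t,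
s + t = k + ℓ, ℓ < s ≤ t, neither containing p: each of σ and τ has exactly one
extension to a face of one dimension higher disjoint from the other. -/
theorem stmt6 (k l s t : ℕ) (hl : l < k) (σ τ : Finset ℕ)
    (hσ : isFaceF k l (k + l + 3) σ) (hτ : isFaceF k l (k + l + 3) τ)
    (hdisj : Disjoint σ τ) (hcσ : σ.card = s + 1) (hcτ : τ.card = t + 1)
    (hst : s + t = k + l) (hls : l < s) (hstle : s ≤ t)
    (h0σ : 0 ∉ σ) (h0τ : 0 ∉ τ) :
    {ν : Finset ℕ | isFaceF k l (k + l + 3) ν ∧ σ ⊆ ν ∧ ν.card = s + 2 ∧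
      Disjoint ν τ}.ncard = 1 ∧
    {ν : Finset ℕ | isFaceF k l (k + l + 3) ν ∧ τ ⊆ ν ∧ ν.card = t + 2 ∧
      Disjoint ν σ}.ncard = 1 := by
  have hlt : l < t := lt_of_lt_of_le hls hstle
  constructor
  · exact stmt6_aux k l s t σ τ hσ hτ hdisj hcσ hcτ hst hls hlt h0σ h0τ
  · exact stmt6_aux k l t s τ σ hτ hσ hdisj.symm hcτ hcσ (by omega) hlt hls h0τ h0σ
end

section
/- Fix integers 0 ≤ ℓ < k, let n = k + ℓ + 3, and let F be the abstract simplicial complex on vertex set [n] ∪ {p} whose faces are all subsets of [n] of size at most k + 1 and all sets {p} ∪ σ with σ ⊆ [n] of size at most ℓ + 1. Let σ, τ be disjoint faces of F with dim σ = s = ℓ + 1, dim τ = t = k − 1, and p ∈ σ. Then: (i) no (s+1)-dimensional face of F contains σ, and (ii) there are exactly two (t+1)-dimensional faces of F containing τ and disjoint from σ. -/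
/-- for disjoint faces σ, τ of F with dim σ = ℓ + 1, p ∈ σ, and
dim τ = k − 1: (i) no face of dimension ℓ + 2 contains σ;
(ii) exactly two k-dimensional faces contain τ and are disjoint from σ. -/
theorem stmt7 (k l : ℕ) (hl : l < k) (σ τ : Finset ℕ)
    (hσ : isFaceF k l (k + l + 3) σ) (hτ : isFaceF k l (k + l + 3) τ)
    (hdisj : Disjoint σ τ) (hcσ : σ.card = l + 2) (h0σ : 0 ∈ σ)
    (hcτ : τ.card = k) :
    {ν : Finset ℕ | isFaceF k l (k + l + 3) ν ∧ σ ⊆ ν ∧ ν.card = l + 3} = ∅ ∧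
    {ν : Finset ℕ | isFaceF k l (k + l + 3) ν ∧ τ ⊆ ν ∧ ν.card = k + 1 ∧
      Disjoint ν σ}.ncard = 2 := by
  obtain ⟨hσne, hσsub, hσif⟩ := hσ
  obtain ⟨hτne, hτsub, hτif⟩ := hτ
  set n := k + l + 3 with hn
  have h0τ : 0 ∉ τ := fun h => Finset.disjoint_left.mp hdisj h0σ h
  have hτI : τ ⊆ Finset.Icc 1 n := by
    intro x hx
    rcases Finset.mem_insert.mp (hτsub hx) with h | h
    · exact absurd (h ▸ hx) h0τ
    · exact h
  have hσ'I : σ.erase 0 ⊆ Finset.Icc 1 n := by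
    intro x hx
    rcases Finset.mem_erase.mp hx with ⟨hx0, hxσ⟩
    rcases Finset.mem_insert.mp (hσsub hxσ) with h | h
    · exact absurd h hx0
    · exact h
  have hσ'card : (σ.erase 0).card = l + 1 := by
    rw [Finset.card_erase_of_mem h0σ, hcσ]; omega
  set A := Finset.Icc 1 n \ (σ.erase 0 ∪ τ) with hA
  have hdisj' : Disjoint (σ.erase 0) τ := Finset.disjoint_left.mpr
    fun x hx => Finset.disjoint_left.mp hdisj (Finset.mem_of_mem_erase hx)
  have hAcard : A.card = 2 := by
    rw [hA, Finset.card_sdiff_of_subset (Finset.union_subset hσ'I hτI),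
      Finset.card_union_of_disjoint, hσ'card, hcτ, Nat.card_Icc]
    · omega
    · exact Finset.disjoint_left.mpr fun x hx hx2 =>
        Finset.disjoint_left.mp hdisj (Finset.mem_of_mem_erase hx) hx2
  constructor
  · ext ν
    simp only [Set.mem_setOf_eq, Set.mem_empty_iff_false, iff_false]
    rintro ⟨⟨_, _, hif⟩, hsub, hcard⟩
    have h0ν : (0:ℕ) ∈ ν := hsub h0σ
    rw [if_pos h0ν] at hif
    omega
  · have hset : {ν : Finset ℕ | isFaceF k l n ν ∧ τ ⊆ ν ∧ ν.card = k + 1 ∧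
        Disjoint ν σ} = ↑(A.image (fun x => insert x τ)) := by
      ext ν
      simp only [Set.mem_setOf_eq, Finset.coe_image, Set.mem_image, Finset.mem_coe]
      constructor
      · rintro ⟨⟨hne, hsub, hif⟩, hτν, hcard, hdν⟩
        have h0ν : 0 ∉ ν := fun h => Finset.disjoint_left.mp hdν h h0σ
        have hνI : ν ⊆ Finset.Icc 1 n := by
          intro x hx
          rcases Finset.mem_insert.mp (hsub hx) with h | h
          · exact absurd (h ▸ hx) h0ν
          · exact h
        have hdiff : (ν \ τ).card = 1 := by
          rw [Finset.card_sdiff_of_subset hτν]; omega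
        obtain ⟨x, hx⟩ := Finset.card_eq_one.mp hdiff
        have hxmem : x ∈ ν \ τ := hx ▸ Finset.mem_singleton_self x
        obtain ⟨hxν, hxτ⟩ := Finset.mem_sdiff.mp hxmem
        refine ⟨x, ?_, ?_⟩
        · rw [hA, Finset.mem_sdiff, Finset.mem_union]
          refine ⟨hνI hxν, ?_⟩
          push_neg
          exact ⟨fun h => Finset.disjoint_left.mp hdν hxν (Finset.mem_of_mem_erase h),
            hxτ⟩
        · apply Finset.eq_of_subset_of_card_le
          · exact Finset.insert_subset hxν hτν
          · rw [Finset.card_insert_of_notMem hxτ, hcτ, hcard]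
      · rintro ⟨x, hxA, rfl⟩
        rw [hA, Finset.mem_sdiff, Finset.mem_union] at hxA
        obtain ⟨hxI, hx2⟩ := hxA
        push_neg at hx2
        obtain ⟨hxσ', hxτ⟩ := hx2
        have hx0 : x ≠ 0 := by
          have := Finset.mem_Icc.mp hxI; omega
        have hxσ : x ∉ σ := fun h => hxσ' (Finset.mem_erase.mpr ⟨hx0, h⟩)
        have h0ins : 0 ∉ insert x τ := by
          simp only [Finset.mem_insert]
          push_neg
          exact ⟨fun h => hx0 h.symm, h0τ⟩
        have hcardins : (insert x τ).card = k + 1 := by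
          rw [Finset.card_insert_of_notMem hxτ, hcτ]
        refine ⟨⟨⟨x, Finset.mem_insert_self x τ⟩, ?_, ?_⟩,
          Finset.subset_insert x τ, hcardins, ?_⟩
        · exact Finset.insert_subset (Finset.mem_insert_of_mem hxI)
            (hτsub)
        · rw [if_neg h0ins, hcardins]
        · rw [Finset.disjoint_left]
          intro a ha haσ
          rcases Finset.mem_insert.mp ha with h | h
          · exact hxσ (h ▸ haσ)
          · exact Finset.disjoint_left.mp hdisj haσ h
    rw [hset, Set.ncard_coe_finset, Finset.card_image_of_injOn, hAcard]
    intro x hx y hy hxy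
    rw [hA, Finset.mem_coe, Finset.mem_sdiff, Finset.mem_union] at hx hy
    have hxτ : x ∉ τ := fun h => hx.2 (Or.inr h)
    have hyτ : y ∉ τ := fun h => hy.2 (Or.inr h)
    simp only at hxy
    have : x ∈ insert y τ := hxy ▸ Finset.mem_insert_self x τ
    rcases Finset.mem_insert.mp this with h | h
    · exact h
    · exact absurd h hxτ
end

section
/- Fix integers 0 ≤ ℓ < k, let n = k + ℓ + 3, and let F be the simplicial complex on [n] ∪ {p} with faces all subsets of [n] of size ≤ k+1 and all {p} ∪ σ with σ ⊆ [n], |σ| ≤ ℓ+1. Then for every pair of disjoint faces σ, τ of F with dim σ + dim τ = k + ℓ, the number of (dim σ + 1)-dimensional faces of F containing σ and disjoint from τ has the same parity as the number of (dim τ + 1)-dimensional faces of F containing τ and disjoint from σ. -/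
theorem count_side (k l n : ℕ) (σ τ : Finset ℕ)
    (hσ : isFaceF k l n σ) (hdisj : Disjoint σ τ) :
    {ν : Finset ℕ | isFaceF k l n ν ∧ σ ⊆ ν ∧ ν.card = σ.card + 1 ∧ Disjoint ν τ}.ncard
      = (((insert 0 (Finset.Icc 1 n)) \ (σ ∪ τ)).filter
          (fun v => if v = 0 ∨ 0 ∈ σ then σ.card + 1 ≤ l + 2 else σ.card + 1 ≤ k + 1)).card := by
  classical
  have himg : {ν : Finset ℕ | isFaceF k l n ν ∧ σ ⊆ ν ∧ ν.card = σ.card + 1 ∧ Disjoint ν τ}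
      = (fun v => insert v σ) '' ↑(((insert 0 (Finset.Icc 1 n)) \ (σ ∪ τ)).filter
          (fun v => if v = 0 ∨ 0 ∈ σ then σ.card + 1 ≤ l + 2 else σ.card + 1 ≤ k + 1)) := by
    ext ν
    simp only [Set.mem_setOf_eq, Set.mem_image, Finset.coe_filter, Finset.mem_sdiff,
      Finset.mem_union]
    constructor
    · rintro ⟨⟨hne, hsub, hcond⟩, hσν, hcard, hd⟩
      have h1 : (ν \ σ).card = 1 := by
        rw [Finset.card_sdiff_of_subset hσν]; omega
      obtain ⟨v, hv⟩ := Finset.card_eq_one.mp h1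
      have hvν : v ∈ ν := (Finset.mem_sdiff.mp (hv ▸ Finset.mem_singleton_self v)).1
      have hvσ : v ∉ σ := (Finset.mem_sdiff.mp (hv ▸ Finset.mem_singleton_self v)).2
      have hνeq : ν = insert v σ := by
        have := Finset.union_sdiff_of_subset hσν
        rw [hv] at this
        rw [← this, Finset.union_comm]
        simp [Finset.insert_eq, -Finset.singleton_union]
      refine ⟨v, ⟨⟨⟨hsub hvν, fun h => h.elim (hvσ ·) (Finset.disjoint_left.mp hd hvν ·)⟩, ?_⟩, hνeq.symm⟩⟩
      have h0 : (0 ∈ ν) ↔ (v = 0 ∨ 0 ∈ σ) := by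
        rw [hνeq]; simp [eq_comm]
      rw [hcard] at hcond
      by_cases hc : v = 0 ∨ 0 ∈ σ
      · rw [if_pos hc]; rw [if_pos (h0.mpr hc)] at hcond; exact hcond
      · rw [if_neg hc]; rw [if_neg (fun h => hc (h0.mp h))] at hcond; exact hcond
    · rintro ⟨v, ⟨⟨hvV, hvστ⟩, hc⟩, rfl⟩
      have hvσ : v ∉ σ := fun h => hvστ (Or.inl h)
      have hvτ : v ∉ τ := fun h => hvστ (Or.inr h)
      have hcard : (insert v σ).card = σ.card + 1 := Finset.card_insert_of_notMem hvσ
      refine ⟨⟨Finset.insert_nonempty _ _, Finset.insert_subset hvV hσ.2.1, ?_⟩,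
        Finset.subset_insert _ _, hcard, ?_⟩
      · have h0 : (0 ∈ insert v σ) ↔ (v = 0 ∨ 0 ∈ σ) := by simp [eq_comm]
        by_cases hcc : v = 0 ∨ 0 ∈ σ
        · rw [if_pos (h0.mpr hcc)]; rw [if_pos hcc] at hc; rw [hcard]; exact hc
        · rw [if_neg (fun h => hcc (h0.mp h))]; rw [if_neg hcc] at hc; rw [hcard]; exact hc
      · rw [Finset.disjoint_left]
        intro a ha
        rcases Finset.mem_insert.mp ha with rfl | ha
        · exact hvτ
        · exact Finset.disjoint_left.mp hdisj ha
  rw [himg, Set.ncard_image_of_injOn, Set.ncard_coe_finset]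
  intro v hv w hw hvw
  simp only [Finset.coe_filter, Set.mem_setOf_eq, Finset.mem_sdiff, Finset.mem_union] at hv hw
  have hvσ : v ∉ σ := fun h => hv.1.2 (Or.inl h)
  have hwσ : w ∉ σ := fun h => hw.1.2 (Or.inl h)
  have hvw' : insert v σ = insert w σ := hvw
  have : v ∈ insert w σ := hvw' ▸ Finset.mem_insert_self v σ
  rcases Finset.mem_insert.mp this with h | h
  · exact h
  · exact absurd h hvσ

/-- for every pair of disjoint faces σ, τ of F with
dim σ + dim τ = k + ℓ, the number of (dim σ + 1)-dimensional faces containing σ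
and disjoint from τ has the same parity as the number of (dim τ + 1)-dimensional
faces containing τ and disjoint from σ. -/
theorem stmt8 (k l : ℕ) (hl : l < k) (σ τ : Finset ℕ)
    (hσ : isFaceF k l (k + l + 3) σ) (hτ : isFaceF k l (k + l + 3) τ)
    (hdisj : Disjoint σ τ) (hdim : σ.card + τ.card = k + l + 2) :
    {ν : Finset ℕ | isFaceF k l (k + l + 3) ν ∧ σ ⊆ ν ∧ ν.card = σ.card + 1 ∧
      Disjoint ν τ}.ncard % 2 =
    {ν : Finset ℕ | isFaceF k l (k + l + 3) ν ∧ τ ⊆ ν ∧ ν.card = τ.card + 1 ∧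
      Disjoint ν σ}.ncard % 2 := by
  classical
  set n := k + l + 3 with hn
  rw [count_side k l n σ τ hσ hdisj, count_side k l n τ σ hτ hdisj.symm,
    Finset.union_comm τ σ]
  set V := insert 0 (Finset.Icc 1 n) with hV
  set D := V \ (σ ∪ τ) with hDdef
  have h0Icc : (0:ℕ) ∉ Finset.Icc 1 n := by simp
  have hVcard : V.card = n + 1 := by
    rw [hV, Finset.card_insert_of_notMem h0Icc, Nat.card_Icc]; omega
  have hsubV : σ ∪ τ ⊆ V := Finset.union_subset hσ.2.1 hτ.2.1
  have hστcard : (σ ∪ τ).card = k + l + 2 := by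
    rw [Finset.card_union_of_disjoint hdisj, hdim]
  have hDcard : D.card = 2 := by
    rw [hDdef, Finset.card_sdiff_of_subset hsubV, hVcard, hστcard]; omega
  have hDne0 : ∀ v ∈ D, v ∉ σ ∧ v ∉ τ := by
    intro v hv
    have := (Finset.mem_sdiff.mp hv).2
    simp only [Finset.mem_union] at this
    exact ⟨fun h => this (Or.inl h), fun h => this (Or.inr h)⟩
  by_cases h0σ : 0 ∈ σ
  · -- 0 ∈ σ, so 0 ∉ τ and 0 ∉ D
    have h0τ : 0 ∉ τ := Finset.disjoint_left.mp hdisj h0σ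
    have h0D : ∀ v ∈ D, v ≠ 0 := fun v hv h => (hDne0 v hv).1 (h ▸ h0σ)
    have hsb : σ.card ≤ l + 2 := by have := hσ.2.2; rwa [if_pos h0σ] at this
    have htb : τ.card ≤ k + 1 := by have := hτ.2.2; rwa [if_neg h0τ] at this
    by_cases hA : σ.card + 1 ≤ l + 2
    · have e1 : D.filter (fun v => if v = 0 ∨ 0 ∈ σ then σ.card + 1 ≤ l + 2
          else σ.card + 1 ≤ k + 1) = D := by
        apply Finset.filter_true_of_mem
        intro v hv; rw [if_pos (Or.inr h0σ)]; exact hA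
      have e2 : D.filter (fun v => if v = 0 ∨ 0 ∈ τ then τ.card + 1 ≤ l + 2
          else τ.card + 1 ≤ k + 1) = ∅ := by
        apply Finset.filter_false_of_mem
        intro v hv
        rw [if_neg (by rintro (h0 | h); exact h0D v hv h0; exact h0τ h)]
        omega
      rw [e1, e2, hDcard]; simp
    · have e1 : D.filter (fun v => if v = 0 ∨ 0 ∈ σ then σ.card + 1 ≤ l + 2
          else σ.card + 1 ≤ k + 1) = ∅ := by
        apply Finset.filter_false_of_mem
        intro v hv; rw [if_pos (Or.inr h0σ)]; exact hA
      have e2 : D.filter (fun v => if v = 0 ∨ 0 ∈ τ then τ.card + 1 ≤ l + 2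
          else τ.card + 1 ≤ k + 1) = D := by
        apply Finset.filter_true_of_mem
        intro v hv
        rw [if_neg (by rintro (h0 | h); exact h0D v hv h0; exact h0τ h)]
        omega
      rw [e1, e2, hDcard]; simp
  · by_cases h0τ : 0 ∈ τ
    · -- symmetric
      have h0D : ∀ v ∈ D, v ≠ 0 := fun v hv h => (hDne0 v hv).2 (h ▸ h0τ)
      have htb : τ.card ≤ l + 2 := by have := hτ.2.2; rwa [if_pos h0τ] at this
      have hsb : σ.card ≤ k + 1 := by have := hσ.2.2; rwa [if_neg h0σ] at this
      by_cases hA : τ.card + 1 ≤ l + 2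
      · have e2 : D.filter (fun v => if v = 0 ∨ 0 ∈ τ then τ.card + 1 ≤ l + 2
            else τ.card + 1 ≤ k + 1) = D := by
          apply Finset.filter_true_of_mem
          intro v hv; rw [if_pos (Or.inr h0τ)]; exact hA
        have e1 : D.filter (fun v => if v = 0 ∨ 0 ∈ σ then σ.card + 1 ≤ l + 2
            else σ.card + 1 ≤ k + 1) = ∅ := by
          apply Finset.filter_false_of_mem
          intro v hv
          rw [if_neg (by rintro (h0 | h); exact h0D v hv h0; exact h0σ h)]
          omega
        rw [e1, e2, hDcard]; simp
      · have e2 : D.filter (fun v => if v = 0 ∨ 0 ∈ τ then τ.card + 1 ≤ l + 2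
            else τ.card + 1 ≤ k + 1) = ∅ := by
          apply Finset.filter_false_of_mem
          intro v hv; rw [if_pos (Or.inr h0τ)]; exact hA
        have e1 : D.filter (fun v => if v = 0 ∨ 0 ∈ σ then σ.card + 1 ≤ l + 2
            else σ.card + 1 ≤ k + 1) = D := by
          apply Finset.filter_true_of_mem
          intro v hv
          rw [if_neg (by rintro (h0 | h); exact h0D v hv h0; exact h0σ h)]
          omega
        rw [e1, e2, hDcard]; simp
    · -- 0 free
      have hsb : σ.card ≤ k + 1 := by have := hσ.2.2; rwa [if_neg h0σ] at this
      have htb : τ.card ≤ k + 1 := by have := hτ.2.2; rwa [if_neg h0τ] at this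
      have h0D : (0:ℕ) ∈ D := by
        rw [hDdef, Finset.mem_sdiff]
        exact ⟨Finset.mem_insert_self _ _, by simp [h0σ, h0τ]⟩
      have hE : (D.erase 0).card = 1 := by
        rw [Finset.card_erase_of_mem h0D, hDcard]
      obtain ⟨w, hw⟩ := Finset.card_eq_one.mp hE
      have hw0 : w ≠ 0 := by
        have : w ∈ D.erase 0 := hw ▸ Finset.mem_singleton_self w
        exact (Finset.mem_erase.mp this).1
      have hwD : w ∈ D := by
        have : w ∈ D.erase 0 := hw ▸ Finset.mem_singleton_self w
        exact (Finset.mem_erase.mp this).2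
      have hDeq : D = insert 0 {w} := by
        rw [← hw, Finset.insert_erase h0D]
      rw [hDeq, Finset.filter_insert, Finset.filter_insert,
        Finset.filter_singleton, Finset.filter_singleton]
      simp only [eq_self_iff_true, true_or, if_true, hw0, h0σ, h0τ, false_or, or_false,
        if_false]
      by_cases hA : σ.card + 1 ≤ l + 2
      · have hB : σ.card + 1 ≤ k + 1 := by omega
        have hA' : ¬ (τ.card + 1 ≤ l + 2) := by omega
        have hB' : ¬ (τ.card + 1 ≤ k + 1) := by omega
        simp [hA, hB, hA', hB', hw0, Finset.card_pair (Ne.symm hw0)]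
      · by_cases hB : σ.card + 1 ≤ k + 1
        · have hA' : ¬ (τ.card + 1 ≤ l + 2) := by omega
          have hB' : τ.card + 1 ≤ k + 1 := by omega
          simp [hA, hB, hA', hB', hw0]
        · have hA' : τ.card + 1 ≤ l + 2 := by omega
          have hB' : τ.card + 1 ≤ k + 1 := by omega
          simp [hA, hB, hA', hB', hw0, Finset.card_pair (Ne.symm hw0)]
end
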